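/- Let p₁, ..., p_t be distinct primes with d ∈ M_b(p_i) and ord_{p_i}(b) = d·k_i for each i, let h_i ≥ 1, N = p₁^{h₁}···p_t^{h_t}, m_i = ν_{p_i}(b^{ord_{p_i}(b)} − 1). Then ord_N(b) = d · lcm(p₁^{h₁−m₁}k₁, ..., p_t^{h_t−m_t}k_t), where any exponent h_i − m_i ≤ 0 is replaced by 0. -/

import Mathlib

lemma pow_eq_one_iff_dvd (b M n : ℕ) (hb : 1 ≤ b) :
    (b : ZMod M) ^ n = 1 ↔ M ∣ b ^ n - 1 := by
  rw [← Nat.cast_pow, ← Nat.cast_one (R := ZMod M), ZMod.natCast_eq_natCast_iff,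
    Nat.ModEq.comm, Nat.modEq_iff_dvd' (Nat.one_le_pow _ _ hb)]

lemma ord_pos_of_coprime (M b : ℕ) (hM : M ≠ 0) (hcop : Nat.Coprime b M) :
    0 < orderOf (b : ZMod M) := by
  haveI : NeZero M := ⟨hM⟩
  have := ZMod.coe_unitOfCoprime b hcop
  rw [← this, orderOf_units]
  exact orderOf_pos _

lemma ord_prime_pow (p : ℕ) (hp : p.Prime) (hodd : Odd p) (b : ℕ) (hb : 1 < b)
    (hpb : ¬ p ∣ b) (h : ℕ) (hh : 1 ≤ h) :
    orderOf (b : ZMod (p ^ h)) =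
      p ^ (h - padicValNat p (b ^ orderOf (b : ZMod p) - 1)) * orderOf (b : ZMod p) := by
  haveI : Fact p.Prime := ⟨hp⟩
  have hcop : Nat.Coprime b p := Nat.coprime_comm.mp (hp.coprime_iff_not_dvd.mpr hpb)
  set q := orderOf (b : ZMod p) with hq
  set m := padicValNat p (b ^ q - 1) with hm
  have hq0 : 0 < q := ord_pos_of_coprime p b hp.pos.ne' hcop
  have hbq : 1 < b ^ q := Nat.one_lt_pow hq0.ne' hb
  have hne : b ^ q - 1 ≠ 0 := by omega
  have hpdvd : p ∣ b ^ q - 1 := by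
    rw [← pow_eq_one_iff_dvd b p q hb.le]; exact pow_orderOf_eq_one _
  have hm1 : 1 ≤ m := one_le_padicValNat_of_dvd (by omega) hpdvd
  -- LTE consequence
  have hLTE : ∀ s : ℕ, s ≠ 0 → padicValNat p (b ^ (q * s) - 1) = m + padicValNat p s := by
    intro s hs
    have := padicValNat.pow_sub_pow (p := p) hodd (x := b ^ q) (y := 1) hbq
      (by simpa using hpdvd) (by simpa [hp.dvd_of_dvd_pow] using fun hc => hpb (hp.dvd_of_dvd_pow hc)) hs
    simpa [one_pow, ← pow_mul] using this
  have hval : ∀ n : ℕ, n ≠ 0 → ((b : ZMod (p ^ h)) ^ n = 1 ↔ q * p ^ (h - m) ∣ n) := by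
    intro n hn
    rw [pow_eq_one_iff_dvd b _ n hb.le]
    constructor
    · intro hdvd
      have hq_dvd : q ∣ n := by
        apply orderOf_dvd_of_pow_eq_one
        rw [pow_eq_one_iff_dvd b p n hb.le]
        exact dvd_trans (dvd_pow_self p (by omega : h ≠ 0)) hdvd
      obtain ⟨s, rfl⟩ := hq_dvd
      have hs : s ≠ 0 := by rintro rfl; simp at hn
      have hle : h ≤ padicValNat p (b ^ (q * s) - 1) := by
        rw [← padicValNat_dvd_iff_le (by
          have : 1 < b ^ (q * s) := Nat.one_lt_pow (by positivity) hb
          omega)]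
        exact hdvd
      rw [hLTE s hs] at hle
      exact Nat.mul_dvd_mul_left q ((padicValNat_dvd_iff_le hs).mpr (by omega))
    · intro hdvd
      obtain ⟨c, rfl⟩ := hdvd
      have hc : c ≠ 0 := by rintro rfl; simp at hn
      have hs0 : p ^ (h - m) * c ≠ 0 := Nat.mul_ne_zero (pow_ne_zero _ hp.pos.ne') hc
      rw [mul_assoc]
      have hbig : 1 < b ^ (q * (p ^ (h - m) * c)) :=
        Nat.one_lt_pow (Nat.mul_ne_zero hq0.ne' hs0) hb
      rw [padicValNat_dvd_iff_le (by omega), hLTE _ hs0]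
      have : h - m ≤ padicValNat p (p ^ (h - m) * c) := by
        rw [padicValNat.mul (pow_ne_zero _ hp.pos.ne') hc, padicValNat.prime_pow]
        omega
      omega
  have hn0 : orderOf (b : ZMod (p ^ h)) ≠ 0 := by
    have := ord_pos_of_coprime (p ^ h) b (pow_ne_zero _ hp.pos.ne') (Nat.Coprime.pow_right h hcop)
    omega
  have h1 : orderOf (b : ZMod (p ^ h)) ∣ q * p ^ (h - m) := by
    apply orderOf_dvd_of_pow_eq_one
    exact (hval _ (Nat.mul_ne_zero hq0.ne' (pow_ne_zero _ hp.pos.ne'))).mpr dvd_rfl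
  have h2 : q * p ^ (h - m) ∣ orderOf (b : ZMod (p ^ h)) :=
    (hval _ hn0).mp (pow_orderOf_eq_one _)
  rw [Nat.dvd_antisymm h1 h2, mul_comm]

lemma ord_prod {ι : Type*} [DecidableEq ι] (b : ℕ) (s : Finset ι) (f : ι → ℕ)
    (hcop : ∀ i ∈ s, ∀ j ∈ s, i ≠ j → Nat.Coprime (f i) (f j)) :
    orderOf (b : ZMod (∏ i ∈ s, f i)) = s.lcm fun i => orderOf (b : ZMod (f i)) := by
  induction s using Finset.cons_induction with
  | empty => simp [Subsingleton.elim (b : ZMod 1) 1]; exact orderOf_eq_one_iff.mpr (Subsingleton.elim (b : ZMod 1) 1)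
  | cons a s ha ih =>
    rw [Finset.prod_cons, Finset.cons_eq_insert, Finset.lcm_insert]
    have hc : Nat.Coprime (f a) (∏ i ∈ s, f i) :=
      Nat.Coprime.prod_right fun i hi =>
        hcop a (Finset.mem_cons_self a s) i (Finset.mem_cons_of_mem hi)
          (by rintro rfl; exact ha hi)
    have e := ZMod.chineseRemainder hc
    have key : orderOf (b : ZMod (f a * ∏ i ∈ s, f i)) =
        orderOf (((b : ZMod (f a)), (b : ZMod (∏ i ∈ s, f i))) : ZMod (f a) × ZMod (∏ i ∈ s, f i)) := by
      have h1 : e.toRingHom.toMonoidHom ((b : ℕ) : ZMod (f a * ∏ i ∈ s, f i)) =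
          ((b : ZMod (f a)), (b : ZMod (∏ i ∈ s, f i))) := by
        show e ((b : ℕ) : ZMod (f a * ∏ i ∈ s, f i)) = _
        rw [map_natCast e b]
        exact Prod.ext (Prod.fst_natCast b) (Prod.snd_natCast b)
      rw [← orderOf_injective e.toRingHom.toMonoidHom e.injective, h1]
    rw [key, Prod.orderOf, ih (fun i hi j hj hij =>
      hcop i (Finset.mem_cons_of_mem hi) j (Finset.mem_cons_of_mem hj) hij),
      lcm_eq_nat_lcm]

lemma lcm_mul_left_nat {ι : Type*} [DecidableEq ι] (s : Finset ι) (hs : s.Nonempty) (a : ℕ) (f : ι → ℕ) :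
    (s.lcm fun i => a * f i) = a * s.lcm f := by
  induction hs using Finset.Nonempty.cons_induction with
  | singleton i => simp [Finset.lcm_singleton]
  | cons i s hi hs ih =>
    rw [Finset.cons_eq_insert, Finset.lcm_insert, Finset.lcm_insert, ih,
      lcm_eq_nat_lcm, lcm_eq_nat_lcm]
    exact Nat.lcm_mul_left _ _ _


/-- `d ∈ M_b(N)`: for every prime `r` dividing `gcd(b^{ord_N(b)/d} − 1, N)`,
`ν_r(N) ≤ ν_r(d)`. -/
def MidyProp (b N d : ℕ) : Prop :=
  ∀ r : ℕ, r.Prime → r ∣ Nat.gcd (b ^ (orderOf (b : ZMod N) / d) - 1) N →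
    padicValNat r N ≤ padicValNat r d

/-- with `d ∈ M_b(p_i)`, `ord_{p_i}(b) = d·k_i`,
`m_i = ν_{p_i}(b^{ord_{p_i}(b)} − 1)` and `N = ∏ p_i^{h_i}`,
`ord_N(b) = d · lcm_i (p_i^{h_i − m_i}·k_i)` (truncated subtraction). -/
theorem stmt16 (b t : ℕ) (hb : 1 < b) (ht : 0 < t)
    (p h k : Fin t → ℕ) (d : ℕ) (hd : 1 < d)
    (hp : ∀ i, (p i).Prime) (hinj : Function.Injective p)
    (hpb : ∀ i, ¬ p i ∣ b) (hh : ∀ i, 1 ≤ h i)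
    (hki : ∀ i, orderOf (b : ZMod (p i)) = d * k i)
    (hM : ∀ i, MidyProp b (p i) d) :
    orderOf (b : ZMod (∏ i, p i ^ h i)) =
      d * Finset.univ.lcm
        (fun i => p i ^ (h i - padicValNat (p i) (b ^ orderOf (b : ZMod (p i)) - 1)) * k i) := by
  have hcop : ∀ i, Nat.Coprime b (p i) := fun i =>
    Nat.coprime_comm.mp ((hp i).coprime_iff_not_dvd.mpr (hpb i))
  have hk1 : ∀ i, 1 ≤ k i := by
    intro i
    have hpos := ord_pos_of_coprime (p i) b (hp i).pos.ne' (hcop i)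
    rw [hki i] at hpos
    rcases Nat.eq_zero_or_pos (k i) with h0 | h1
    · rw [h0, mul_zero] at hpos; omega
    · exact h1
  have hodd : ∀ i, Odd (p i) := by
    intro i
    haveI : Fact (p i).Prime := ⟨hp i⟩
    have hdvd : orderOf (b : ZMod (p i)) ∣ p i - 1 := by
      rw [← ZMod.card_units (p i), ← ZMod.coe_unitOfCoprime b (hcop i), orderOf_units]
      exact orderOf_dvd_card
    rw [hki i] at hdvd
    have h2 : 2 ≤ d * k i := le_trans hd (Nat.le_mul_of_pos_right d (hk1 i))
    have h3 : 2 ≤ p i - 1 := le_trans h2 (Nat.le_of_dvd (by have := (hp i).two_le; omega) hdvd)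
    exact (hp i).odd_of_ne_two (by omega)
  have hord : ∀ i, orderOf (b : ZMod (p i ^ h i)) =
      d * (p i ^ (h i - padicValNat (p i) (b ^ orderOf (b : ZMod (p i)) - 1)) * k i) := by
    intro i
    rw [ord_prime_pow (p i) (hp i) (hodd i) b hb (hpb i) (h i) (hh i), hki i]
    ring
  haveI : Nonempty (Fin t) := ⟨⟨0, ht⟩⟩
  rw [ord_prod b Finset.univ (fun i => p i ^ h i) (fun i _ j _ hij =>
    Nat.Coprime.pow _ _ ((Nat.coprime_primes (hp i) (hp j)).mpr (fun e => hij (hinj e)))),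
    show (fun i => orderOf (b : ZMod (p i ^ h i))) =
      fun i => d * (p i ^ (h i - padicValNat (p i) (b ^ orderOf (b : ZMod (p i)) - 1)) * k i)
      from funext hord,
    lcm_mul_left_nat Finset.univ Finset.univ_nonempty d _]
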